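/- Let f: ℝ → (−∞,+∞] be convex, increasing and lower semicontinuous with effective domain a neighborhood of zero. If 0 belongs to the effective domain of (f∘exp)*, then (f∘exp)*(0) = inf_{α≥0} f*(α). -/

import Mathlib

open scoped EReal

/-- The Legendre–Fenchel transform of an extended-real-valued function on `ℝ`. -/
noncomputable def eConj (f : ℝ → EReal) (a : ℝ) : EReal :=
  ⨆ t : ℝ, ((a * t : ℝ) : EReal) - f t

private lemma le_coe_of_forall_eps {x : EReal} {y : ℝ}
    (h : ∀ ε : ℝ, 0 < ε → x ≤ ((y + ε : ℝ) : EReal)) : x ≤ (y : EReal) := by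
  by_contra hc
  push_neg at hc
  obtain ⟨z, hz1, hz2⟩ := EReal.exists_between_coe_real hc
  have hε : (0:ℝ) < z - y := by exact_mod_cast sub_pos.2 (EReal.coe_lt_coe_iff.1 hz1)
  have := h (z - y) hε
  rw [show y + (z - y) = z by ring] at this
  exact absurd (this.trans_lt hz2) (lt_irrefl _)

private lemma coe_le_of_forall_eps {x : EReal} {y : ℝ}
    (h : ∀ ε : ℝ, 0 < ε → ((y - ε : ℝ) : EReal) ≤ x) : (y : EReal) ≤ x := by
  by_contra hc
  push_neg at hc
  obtain ⟨z, hz1, hz2⟩ := EReal.exists_between_coe_real hc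
  have hε : (0:ℝ) < y - z := by exact_mod_cast sub_pos.2 (EReal.coe_lt_coe_iff.1 hz2)
  have := h (y - z) hε
  rw [show y - (y - z) = z by ring] at this
  exact absurd (hz1.trans_le this) (lt_irrefl _)


/-- Let `f : ℝ → (−∞,+∞]` be convex, increasing and lower semicontinuous
with effective domain a neighborhood of zero.  If `0` belongs to the effective domain of
`(f ∘ exp)*`, then `(f ∘ exp)*(0) = inf_{α ≥ 0} f*(α)`. -/
theorem conj_comp_exp_at_zero
    (f : ℝ → EReal)
    (hconv : ∀ x y s : ℝ, 0 ≤ s → s ≤ 1 →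
      f (s * x + (1 - s) * y) ≤ (s : EReal) * f x + ((1 - s : ℝ) : EReal) * f y)
    (hmono : Monotone f)
    (hlsc : LowerSemicontinuous f)
    (hdom : {t : ℝ | f t < ⊤} ∈ nhds (0 : ℝ))
    (hadom : eConj (fun t => f (Real.exp t)) 0 < ⊤) :
    eConj (fun t => f (Real.exp t)) 0 = ⨅ α ∈ Set.Ici (0 : ℝ), eConj f α := by
  -- f is never ⊥ on positive reals
  have hbotpos : ∀ x : ℝ, 0 < x → f x ≠ ⊥ := by
    intro x hx hfx
    have h1 : ((0 * Real.log x : ℝ) : EReal) - f (Real.exp (Real.log x)) ≤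
        eConj (fun t => f (Real.exp t)) 0 := le_iSup (fun t => ((0 * t : ℝ) : EReal) - f (Real.exp t)) (Real.log x)
    rw [Real.exp_log hx, hfx] at h1
    simp only [sub_eq_add_neg, EReal.neg_bot] at h1
    have h2 : (⊤:EReal) ≤ eConj (fun t => f (Real.exp t)) 0 := by
      refine le_trans (le_of_eq ?_) h1
      rw [EReal.add_top_of_ne_bot (EReal.coe_ne_bot _)]
    exact absurd (h2.trans_lt hadom) (lt_irrefl _)
  -- δ with f δ < ⊤
  obtain ⟨ε₀, hε₀, hball⟩ := Metric.mem_nhds_iff.1 hdom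
  set δ : ℝ := ε₀ / 2 with hδdef
  have hδpos : 0 < δ := by positivity
  have hfδtop : f δ < ⊤ := hball (Metric.mem_ball.2 (by rw [Real.dist_eq, sub_zero, abs_of_pos hδpos]; linarith))
  have hf0top : f 0 < ⊤ := (hmono hδpos.le).trans_lt hfδtop
  -- f 0 ≠ ⊥
  have hf0bot : f 0 ≠ ⊥ := by
    intro h0
    have := hconv δ 0 (1/2) (by norm_num) (by norm_num)
    rw [h0, EReal.coe_mul_bot_of_pos (by norm_num : (0:ℝ) < 1 - 1/2), EReal.add_bot] at this
    exact hbotpos _ (by nlinarith : (0:ℝ) < 1/2 * δ + (1 - 1/2) * 0) (le_bot_iff.1 this)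
  set F0 : ℝ := (f 0).toReal with hF0def
  have hF0 : f 0 = (F0 : EReal) := (EReal.coe_toReal hf0top.ne hf0bot).symm
  have hfδbot : f δ ≠ ⊥ := hbotpos δ hδpos
  set Fδ : ℝ := (f δ).toReal with hFδdef
  have hFδ : f δ = (Fδ : EReal) := (EReal.coe_toReal hfδtop.ne hfδbot).symm
  have hF0Fδ : F0 ≤ Fδ := by
    have := hmono hδpos.le
    rw [hF0, hFδ] at this; exact_mod_cast this
  -- selection: ∀ ε>0 ∃ x₀ ∈ (0,δ], f x₀ ≤ F0 + ε
  have hsel : ∀ ε : ℝ, 0 < ε → ∃ x₀ : ℝ, 0 < x₀ ∧ x₀ ≤ δ ∧ f x₀ ≤ ((F0 + ε : ℝ) : EReal) := by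
    intro ε hε
    by_cases hcase : Fδ ≤ F0 + ε
    · exact ⟨δ, hδpos, le_rfl, by rw [hFδ]; exact_mod_cast hcase⟩
    · push_neg at hcase
      set s : ℝ := ε / (Fδ - F0) with hsdef
      have hd : 0 < Fδ - F0 := by linarith
      have hs0 : 0 < s := by positivity
      have hs1 : s ≤ 1 := by
        rw [hsdef, div_le_one hd]; linarith
      have hε' : s * (Fδ - F0) = ε := div_mul_cancel₀ ε hd.ne'
      refine ⟨s * δ + (1 - s) * 0, by nlinarith [mul_pos hs0 hδpos],
        by nlinarith [mul_le_mul_of_nonneg_right hs1 hδpos.le], ?_⟩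
      have := hconv δ 0 s hs0.le hs1
      rw [hF0, hFδ] at this
      refine this.trans ?_
      norm_cast
      nlinarith [hε']
  -- the sup form
  have hLHS1 : eConj (fun t => f (Real.exp t)) 0 = ⨆ t : ℝ, -(f (Real.exp t)) := by
    unfold eConj
    congr 1
    funext t
    simp [sub_eq_add_neg]
  have hsup0 : (⨆ t : ℝ, -(f (Real.exp t))) = ((-F0 : ℝ) : EReal) := by
    apply le_antisymm
    · apply iSup_le
      intro t
      rw [EReal.neg_le]
      rw [show -((-F0 : ℝ) : EReal) = ((F0:ℝ) : EReal) by norm_cast; exact neg_neg F0]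
      rw [← hF0]
      exact hmono (Real.exp_pos t).le
    · apply coe_le_of_forall_eps
      intro ε hε
      obtain ⟨x₀, hx₀pos, _, hx₀le⟩ := hsel ε hε
      have h1 : -(f (Real.exp (Real.log x₀))) ≤ ⨆ t : ℝ, -(f (Real.exp t)) :=
        le_iSup (fun t => -(f (Real.exp t))) (Real.log x₀)
      rw [Real.exp_log hx₀pos] at h1
      refine le_trans ?_ h1
      rw [show ((-F0 - ε : ℝ) : EReal) = -((F0 + ε : ℝ) : EReal) by norm_cast; ring_nf]
      exact EReal.neg_le_neg_iff.2 hx₀le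
  rw [hLHS1, hsup0]
  apply le_antisymm
  · -- -F0 ≤ each eConj f α
    apply le_iInf₂
    intro α hα
    rw [← hsup0]
    apply iSup_le
    intro t
    have h2 : ((α * Real.exp t : ℝ) : EReal) - f (Real.exp t) ≤ eConj f α :=
      le_iSup (fun u => ((α * u : ℝ) : EReal) - f u) (Real.exp t)
    refine le_trans ?_ h2
    rw [sub_eq_add_neg]
    calc -(f (Real.exp t)) = 0 + -(f (Real.exp t)) := (zero_add _).symm
      _ ≤ ((α * Real.exp t : ℝ) : EReal) + -(f (Real.exp t)) := by
          apply add_le_add_left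
          exact_mod_cast mul_nonneg hα (Real.exp_pos t).le
  · -- iInf ≤ -F0
    apply le_coe_of_forall_eps
    intro ε hε
    obtain ⟨x₀, hx₀pos, hx₀δ, hx₀le⟩ := hsel ε hε
    have hfx₀bot : f x₀ ≠ ⊥ := hbotpos x₀ hx₀pos
    have hfx₀top : f x₀ ≠ ⊤ := (hx₀le.trans_lt (EReal.coe_lt_top _)).ne
    set Fx : ℝ := (f x₀).toReal with hFxdef
    have hFx : f x₀ = (Fx : EReal) := (EReal.coe_toReal hfx₀top hfx₀bot).symm
    have hFxF0 : F0 ≤ Fx := by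
      have := hmono hx₀pos.le; rw [hF0, hFx] at this; exact_mod_cast this
    have hFxε : Fx ≤ F0 + ε := by
      rw [hFx] at hx₀le; exact_mod_cast hx₀le
    set α : ℝ := (Fx - F0) / x₀ with hαdef
    have hα : 0 ≤ α := div_nonneg (by linarith) hx₀pos.le
    refine le_trans (iInf₂_le α hα) ?_
    apply iSup_le
    intro t
    -- goal : ↑(α * t) - f t ≤ ↑(-F0 + ε)
    rcases eq_or_ne (f t) ⊤ with htop | htop
    · rw [htop, EReal.sub_top]; exact bot_le
    rcases le_or_gt t 0 with ht0 | ht0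
    · -- t ≤ 0 : convexity between t and x₀
      set s : ℝ := x₀ / (x₀ - t) with hsdef
      have hden : 0 < x₀ - t := by linarith
      have hs0 : 0 < s := by positivity
      have hs1 : s ≤ 1 := by rw [hsdef, div_le_one hden]; linarith
      have hcomb : s * t + (1 - s) * x₀ = 0 := by
        rw [hsdef]; field_simp
        ring
      have hcv := hconv t x₀ s hs0.le hs1
      rw [hcomb, hF0, hFx] at hcv
      have hftbot : f t ≠ ⊥ := by
        intro hb
        rw [hb, EReal.coe_mul_bot_of_pos hs0, EReal.bot_add] at hcv
        exact (EReal.coe_ne_bot F0) (le_bot_iff.1 hcv)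
      set Ft : ℝ := (f t).toReal with hFtdef
      have hFt : f t = (Ft : EReal) := (EReal.coe_toReal htop hftbot).symm
      rw [hFt] at hcv ⊢
      have hcvr : F0 ≤ s * Ft + (1 - s) * Fx := by exact_mod_cast hcv
      have key : α * t - Ft ≤ -F0 + ε := by
        rw [hsdef] at hcvr
        rw [hαdef]
        have h3 : F0 * (x₀ - t) ≤ x₀ * Ft + (-t) * Fx := by
          have := mul_le_mul_of_nonneg_right hcvr hden.le
          field_simp at this
          nlinarith [this]
        have h4 : (Fx - F0) / x₀ * t ≤ Ft - F0 := by
          rw [div_mul_eq_mul_div, div_le_iff₀ hx₀pos]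
          nlinarith
        linarith
      exact_mod_cast key
    rcases le_or_gt t x₀ with htx | htx
    · -- 0 < t ≤ x₀
      have hft : ((F0:ℝ) : EReal) ≤ f t := hF0 ▸ hmono ht0.le
      have hftbot : f t ≠ ⊥ := fun hb => by simp [hb] at hft
      set Ft : ℝ := (f t).toReal with hFtdef
      have hFt : f t = (Ft : EReal) := (EReal.coe_toReal htop hftbot).symm
      rw [hFt] at hft ⊢
      have hftr : F0 ≤ Ft := by exact_mod_cast hft
      have key : α * t - Ft ≤ -F0 + ε := by
        have h5 : α * t ≤ α * x₀ := mul_le_mul_of_nonneg_left htx hα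
        have h6 : α * x₀ = Fx - F0 := by
          rw [hαdef]; field_simp
        linarith
      exact_mod_cast key
    · -- x₀ < t
      set s : ℝ := x₀ / t with hsdef
      have htpos : 0 < t := hx₀pos.trans htx
      have hs0 : 0 < s := by positivity
      have hs1 : s ≤ 1 := by rw [hsdef, div_le_one htpos]; linarith
      have hcomb : s * t + (1 - s) * 0 = x₀ := by
        rw [hsdef]; field_simp; ring
      have hcv := hconv t 0 s hs0.le hs1
      rw [hcomb, hF0, hFx] at hcv
      have hftbot : f t ≠ ⊥ := by
        intro hb
        rw [hb, EReal.coe_mul_bot_of_pos hs0, EReal.bot_add] at hcv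
        exact (EReal.coe_ne_bot Fx) (le_bot_iff.1 hcv)
      set Ft : ℝ := (f t).toReal with hFtdef
      have hFt : f t = (Ft : EReal) := (EReal.coe_toReal htop hftbot).symm
      rw [hFt] at hcv ⊢
      have hcvr : Fx ≤ s * Ft + (1 - s) * F0 := by exact_mod_cast hcv
      have key : α * t - Ft ≤ -F0 + ε := by
        rw [hsdef] at hcvr
        have h3 : Fx * t ≤ x₀ * Ft + (t - x₀) * F0 := by
          have := mul_le_mul_of_nonneg_right hcvr htpos.le
          field_simp at this
          nlinarith [this]
        have h4 : α * t ≤ Ft - F0 := by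
          rw [hαdef, div_mul_eq_mul_div, div_le_iff₀ hx₀pos]
          nlinarith
        linarith
      exact_mod_cast key
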